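/- The mean of the Rayleigh Lomax distribution is E[X] = θ(2/β)^{1/(2λ)} Γ(1/(2λ) + 1) − θ. -/

import Mathlib

open MeasureTheory Real

/-- Mean of the Rayleigh Lomax distribution. -/
theorem rayleigh_lomax_mean
    {Ω : Type*} [MeasurableSpace Ω] (μ : Measure Ω) [IsProbabilityMeasure μ]
    (X : Ω → ℝ) (hX : Measurable X)
    (θ lam β : ℝ) (hθ : 0 < θ) (hlam : 0 < lam) (hβ : 0 < β)
    (hsurv : ∀ x : ℝ, -θ ≤ x →
      μ {ω | x < X ω} = ENNReal.ofReal (exp (-(β / 2) * ((θ + x) / θ) ^ (2 * lam))))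
    (hsupp : ∀ᵐ ω ∂μ, -θ ≤ X ω)
    (hint : Integrable X μ) :
    ∫ ω, X ω ∂μ
      = θ * (2 / β) ^ (1 / (2 * lam)) * Real.Gamma (1 / (2 * lam) + 1) - θ := by
  set p : ℝ := 2 * lam with hp
  have hp0 : 0 < p := by positivity
  set b : ℝ := β / 2 * (θ ^ p)⁻¹ with hb
  have hb0 : 0 < b := by positivity
  have hfint : Integrable (fun ω => X ω + θ) μ := hint.add (integrable_const θ)
  have hfnn : 0 ≤ᵐ[μ] fun ω => X ω + θ := by
    filter_upwards [hsupp] with ω h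
    simp only [Pi.zero_apply]
    linarith
  have key := hfint.integral_eq_integral_meas_lt hfnn
  rw [integral_add hint (integrable_const θ), integral_const, probReal_univ,
    one_smul] at key
  simp only [measureReal_def] at key
  have hcongr : ∫ t in Set.Ioi (0:ℝ), ENNReal.toReal (μ {a | t < X a + θ})
      = ∫ t in Set.Ioi (0:ℝ), Real.exp (-b * t ^ p) := by
    apply setIntegral_congr_fun measurableSet_Ioi
    intro t ht
    have ht0 : (0:ℝ) < t := ht
    have hset : {a | t < X a + θ} = {a | t - θ < X a} := by
      ext a; simp [sub_lt_iff_lt_add]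
    show (μ {a | t < X a + θ}).toReal = Real.exp (-b * t ^ p)
    rw [hset, hsurv (t - θ) (by linarith),
      ENNReal.toReal_ofReal (Real.exp_nonneg _)]
    congr 1
    have : θ + (t - θ) = t := by ring
    rw [this, Real.div_rpow ht0.le hθ.le, hb]
    field_simp
  rw [hcongr, integral_exp_neg_mul_rpow hp0 hb0] at key
  have hbval : b ^ (-1 / p) = θ * (2 / β) ^ (1 / p) := by
    rw [hb, Real.mul_rpow (by positivity) (by positivity)]
    have h1 : (β / 2) ^ (-1 / p) = (2 / β) ^ (1 / p) := by
      rw [neg_div, Real.rpow_neg (by positivity), ← Real.inv_rpow (by positivity),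
        inv_div]
    have h2 : ((θ ^ p)⁻¹) ^ (-1 / p) = θ := by
      rw [← Real.rpow_neg hθ.le, ← Real.rpow_mul hθ.le,
        show -p * (-1 / p) = 1 by field_simp, Real.rpow_one]
    rw [h1, h2]
    ring
  rw [hbval] at key
  linarith [key]
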